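/- Let n ≥ 2 be an integer, κ, λ ∈ ℝ, and let φ : ℝ → ℝ be twice differentiable with φ''(s) = −κ·φ(s) for all s, φ(0) = 1, φ'(0) = −λ. Let S > 0 and let F : (0, S) → ℝ be differentiable with F'(s) ≥ (n−1)κ + F(s)²/(n−1) for all s ∈ (0, S), and suppose liminf_{s→0⁺} F(s) ≥ (n−1)λ. Then for every s ∈ (0, S) such that φ > 0 on (0, s], one has F(s) ≥ −(n−1)·φ'(s)/φ(s). -/
import Mathlib


/-- Riccati comparison: if `F` is differentiable on `(0, S)` with
`F' ≥ (n-1)κ + F²/(n-1)` and `liminf_{s→0⁺} F(s) ≥ (n-1)λ`, and `φ` is the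
Jacobi solution with `φ(0) = 1`, `φ'(0) = -λ`, `φ'' = -κ φ`, then
`F(s) ≥ -(n-1) φ'(s)/φ(s)` on `(0, S)` wherever `φ > 0` on `(0, s]`. -/
theorem riccati_comparison (n : ℕ) (hn : 2 ≤ n) (κ lam S : ℝ) (hS : 0 < S)
    (φ : ℝ → ℝ)
    (hφ : Differentiable ℝ φ) (hφ' : Differentiable ℝ (deriv φ))
    (hode : ∀ s : ℝ, deriv (deriv φ) s = -κ * φ s)
    (hφ0 : φ 0 = 1) (hφ0' : deriv φ 0 = -lam)
    (F : ℝ → ℝ)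
    (hF : ∀ s ∈ Set.Ioo (0 : ℝ) S, DifferentiableAt ℝ F s)
    (hF' : ∀ s ∈ Set.Ioo (0 : ℝ) S,
      ((n : ℝ) - 1) * κ + (F s) ^ 2 / ((n : ℝ) - 1) ≤ deriv F s)
    (hliminf : ∀ ε : ℝ, 0 < ε →
      ∀ᶠ s in nhdsWithin (0 : ℝ) (Set.Ioi 0), ((n : ℝ) - 1) * lam - ε ≤ F s) :
    ∀ s ∈ Set.Ioo (0 : ℝ) S, (∀ u ∈ Set.Ioc (0 : ℝ) s, 0 < φ u) →
      -((n : ℝ) - 1) * deriv φ s / φ s ≤ F s := by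
  intro s hs hφpos
  set c : ℝ := (n : ℝ) - 1 with hc
  have hn2 : (2:ℝ) ≤ (n:ℝ) := by exact_mod_cast hn
  have hc1 : (1:ℝ) ≤ c := by rw [hc]; linarith
  have hc0 : (0:ℝ) < c := lt_of_lt_of_le one_pos hc1
  set G : ℝ → ℝ := fun t => φ t * φ t * F t + c * (φ t * deriv φ t) with hG
  -- derivative of G on (0, S)
  have hGderiv : ∀ t ∈ Set.Ioo (0:ℝ) S, HasDerivAt G
      ((deriv φ t * φ t + φ t * deriv φ t) * F t + φ t * φ t * deriv F t
        + c * (deriv φ t * deriv φ t + φ t * (-κ * φ t))) t := by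
    intro t ht
    have h1 : HasDerivAt φ (deriv φ t) t := (hφ t).hasDerivAt
    have h2 : HasDerivAt (deriv φ) (-κ * φ t) t := by
      have := (hφ' t).hasDerivAt
      rwa [hode t] at this
    have h3 : HasDerivAt F (deriv F t) t := (hF t ht).hasDerivAt
    exact ((h1.mul h1).mul h3).add ((h1.mul h2).const_mul c)
  have hG'nonneg : ∀ t ∈ Set.Ioo (0:ℝ) S,
      0 ≤ (deriv φ t * φ t + φ t * deriv φ t) * F t + φ t * φ t * deriv F t
        + c * (deriv φ t * deriv φ t + φ t * (-κ * φ t)) := by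
    intro t ht
    have hle : c * κ + (F t) ^ 2 / c ≤ deriv F t := hF' t ht
    have hkey : (deriv φ t * φ t + φ t * deriv φ t) * F t + φ t * φ t * deriv F t
        + c * (deriv φ t * deriv φ t + φ t * (-κ * φ t))
        = (φ t * F t + c * deriv φ t) ^ 2 / c
          + φ t * φ t * (deriv F t - (c * κ + (F t) ^ 2 / c)) := by
      field_simp
      ring
    rw [hkey]
    have h1 : 0 ≤ (φ t * F t + c * deriv φ t) ^ 2 / c :=
      div_nonneg (sq_nonneg _) hc0.le
    have h2 : 0 ≤ φ t * φ t * (deriv F t - (c * κ + (F t) ^ 2 / c)) :=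
      mul_nonneg (mul_self_nonneg _) (sub_nonneg.mpr hle)
    linarith
  clear_value c G
  -- G(s) ≥ -2ε for every ε > 0
  have hGs : ∀ ε : ℝ, 0 < ε → -(2*ε) ≤ G s := by
    intro ε hε
    set h : ℝ → ℝ := fun t => φ t * φ t * (c * lam - ε) + c * (φ t * deriv φ t) with hh
    have hcont : ContinuousAt h 0 := by
      have : Continuous h :=
        ((hφ.continuous.mul hφ.continuous).mul continuous_const).add
          (continuous_const.mul (hφ.continuous.mul hφ'.continuous))
      exact this.continuousAt
    have hval : -(2*ε) < h 0 := by
      simp only [hh, hφ0, hφ0']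
      nlinarith
    have h1 : ∀ᶠ t in nhdsWithin (0:ℝ) (Set.Ioi 0), -(2*ε) < h t :=
      (hcont.eventually (eventually_gt_nhds hval)).filter_mono nhdsWithin_le_nhds
    have h2 : ∀ᶠ t in nhdsWithin (0:ℝ) (Set.Ioi 0), c * lam - ε ≤ F t := hliminf ε hε
    have h3 : ∀ᶠ t in nhdsWithin (0:ℝ) (Set.Ioi 0), t ∈ Set.Ioo (0:ℝ) s :=
      Ioo_mem_nhdsGT_of_mem ⟨le_refl _, hs.1⟩
    obtain ⟨t, ⟨ht1, ht2⟩, ht3⟩ := ((h1.and h2).and h3).exists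
    obtain ⟨ht3a, ht3b⟩ := ht3
    -- h t ≤ G t
    have hhG : h t ≤ G t := by
      have := mul_le_mul_of_nonneg_left ht2 (mul_self_nonneg (φ t))
      simp only [hh, hG]
      nlinarith [mul_self_nonneg (φ t)]
    -- G monotone on [t, s]
    have hsub : Set.Icc t s ⊆ Set.Ioo (0:ℝ) S := by
      intro u hu
      exact ⟨lt_of_lt_of_le ht3a hu.1, lt_of_le_of_lt hu.2 hs.2⟩
    have hmono : MonotoneOn G (Set.Icc t s) := by
      apply monotoneOn_of_deriv_nonneg (convex_Icc t s)
      · intro u hu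
        exact (hGderiv u (hsub hu)).continuousAt.continuousWithinAt
      · intro u hu
        rw [interior_Icc] at hu
        exact (hGderiv u (hsub (Set.Ioo_subset_Icc_self hu))).differentiableAt.differentiableWithinAt
      · intro u hu
        rw [interior_Icc] at hu
        rw [(hGderiv u (hsub (Set.Ioo_subset_Icc_self hu))).deriv]
        exact hG'nonneg u (hsub (Set.Ioo_subset_Icc_self hu))
    have hts : G t ≤ G s :=
      hmono ⟨le_refl _, ht3b.le⟩ ⟨ht3b.le, le_refl _⟩ ht3b.le
    linarith
  have hG0 : 0 ≤ G s := by
    rcases le_or_gt 0 (G s) with h | h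
    · exact h
    · exfalso
      have h4 : (0:ℝ) < -(G s)/4 := by
        have : (0:ℝ) < -(G s) := by linarith
        linarith
      have h5 := hGs (-(G s)/4) h4
      linarith
  have hφs : 0 < φ s := hφpos s ⟨hs.1, le_refl _⟩
  rw [div_le_iff₀ hφs]
  simp only [hG] at hG0
  nlinarith [hφs]
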